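/- Let V and U be vector spaces over a field of characteristic zero. Let ρ : V⁴ → U be a 4-linear map which satisfies the circular identity with respect to its first three entries, i.e. ρ(v₁,v₂,v₃,v₄) + ρ(v₂,v₃,v₁,v₄) + ρ(v₃,v₁,v₂,v₄) = 0, and with respect to its last three entries, i.e. ρ(v₁,v₂,v₃,v₄) + ρ(v₁,v₃,v₄,v₂) + ρ(v₁,v₄,v₂,v₃) = 0, and which is antisymmetric in its second and third entries. Then Circ( Alt₂( Sym_{3,4} ρ ) ) = 0. -/
import Mathlib

/-- For a 4-linear `ρ` satisfying the circular identity in its first three and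
last three entries and antisymmetric in its second and third entries, one has
`Circ(Alt₂(Sym_{3,4} ρ)) = 0` (all operators without normalizing coefficients). -/
theorem circ_alt_sym_vanishes
    {K V U : Type*} [Field K] [CharZero K] [AddCommGroup V] [Module K V]
    [AddCommGroup U] [Module K U]
    (ρ : MultilinearMap K (fun _ : Fin 4 => V) U)
    (hc1 : ∀ v₁ v₂ v₃ v₄ : V,
      ρ ![v₁, v₂, v₃, v₄] + ρ ![v₂, v₃, v₁, v₄] + ρ ![v₃, v₁, v₂, v₄] = 0)
    (hc2 : ∀ v₁ v₂ v₃ v₄ : V,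
      ρ ![v₁, v₂, v₃, v₄] + ρ ![v₁, v₃, v₄, v₂] + ρ ![v₁, v₄, v₂, v₃] = 0)
    (hanti : ∀ v₁ v₂ v₃ v₄ : V, ρ ![v₁, v₃, v₂, v₄] = - ρ ![v₁, v₂, v₃, v₄]) :
    ∀ v₁ v₂ v₃ v₄ : V,
      (ρ ![v₁, v₂, v₃, v₄] + ρ ![v₁, v₂, v₄, v₃]
        - ρ ![v₂, v₁, v₃, v₄] - ρ ![v₂, v₁, v₄, v₃])
      + (ρ ![v₂, v₃, v₁, v₄] + ρ ![v₂, v₃, v₄, v₁]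
        - ρ ![v₃, v₂, v₁, v₄] - ρ ![v₃, v₂, v₄, v₁])
      + (ρ ![v₃, v₁, v₂, v₄] + ρ ![v₃, v₁, v₄, v₂]
        - ρ ![v₁, v₃, v₂, v₄] - ρ ![v₁, v₃, v₄, v₂]) = 0 := by
  intro v₁ v₂ v₃ v₄
  have e1 := hc1 v₁ v₂ v₃ v₄
  have e2 := hc2 v₁ v₂ v₃ v₄
  have a1 := hanti v₁ v₂ v₄ v₃
  have e3 := hc1 v₁ v₃ v₂ v₄
  have e4 := hc2 v₂ v₁ v₃ v₄
  have a2 := hanti v₂ v₁ v₃ v₄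
  have a3 := hanti v₂ v₁ v₄ v₃
  have e5 := hc2 v₃ v₁ v₂ v₄
  have a4 := hanti v₃ v₁ v₄ v₂
  linear_combination (norm := abel1) e1 + e1 - e2 + a1 - e3 + e4 - a2 - a3 - e5 + a4
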